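/- Let F, G : C → D be finite-coproduct-preserving functors between finitary extensive categories and α : F ⟶ G a natural transformation. Then the naturality square of α at any coproduct summand i : X → Z is a pullback square in D. -/

import Mathlib

open CategoryTheory CategoryTheory.Limits

/-- A morphism `i : X ⟶ Z` is a (binary coproduct) summand if there is a morphism
`j : Y ⟶ Z` such that the cospan `X ⟶ Z ⟵ Y` is a coproduct cocone. -/
def IsSummand {C : Type*} [Category C] {X Z : C} (i : X ⟶ Z) : Prop :=
  ∃ (Y : C) (j : Y ⟶ Z), Nonempty (IsColimit (BinaryCofan.mk i j))

/-- For finite-coproduct preserving functors `F G : C ⥤ D` between finitary extensive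
categories and a natural transformation `α : F ⟶ G`, the naturality square of `α` at any
coproduct summand `i : X ⟶ Z` is a pullback square in `D`. -/
theorem naturality_square_isPullback_of_summand {C D : Type*} [Category C] [Category D]
    [FinitaryExtensive C] [FinitaryExtensive D]
    (F G : C ⥤ D) [PreservesFiniteCoproducts F] [PreservesFiniteCoproducts G]
    (α : F ⟶ G) {X Z : C} (i : X ⟶ Z) (hi : IsSummand i) :
    IsPullback (F.map i) (α.app X) (α.app Z) (G.map i) := by
  obtain ⟨Y, j, ⟨hc⟩⟩ := hi
  have hF : IsColimit (BinaryCofan.mk (F.map i) (F.map j)) :=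
    mapIsColimitOfPreservesOfIsColimit F i j hc
  have hG : IsColimit (BinaryCofan.mk (G.map i) (G.map j)) :=
    mapIsColimitOfPreservesOfIsColimit G i j hc
  have hvk := FinitaryExtensive.vanKampen _ hG
  have := (hvk (BinaryCofan.mk (F.map i) (F.map j))
      (mapPair (α.app X) (α.app Y)) (α.app Z) ?_ (NatTrans.equifibered_of_discrete _)).mp
      ⟨hF⟩ ⟨WalkingPair.left⟩
  · exact this
  · ext ⟨⟨⟩⟩ <;> exact (α.naturality _).symm
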